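/- Let T(y) = p y'' + q y' + r y with polynomial coefficients p, q, r, and suppose T preserves a degree-regular polynomial flag, i.e., for each k there is a polynomial y_k of degree n_k with n_1 < n_2 < ... such that T maps span{y_1,...,y_k} into itself. Then deg p ≤ 2, deg q ≤ 1, and deg r ≤ 0; in particular T preserves the standard flag P_0 ⊂ P_1 ⊂ P_2 ⊂ .... -/

import Mathlib

open Polynomial

/-- Key vanishing lemma: if the operator output has degree ≤ n k for all k, and
`d ≥ 1` bounds the excess degrees, then the top coefficients vanish. -/
lemma bochner_key (p q r : Polynomial ℝ) (y : ℕ → Polynomial ℝ) (n : ℕ → ℕ)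
    (hy0 : ∀ k, y k ≠ 0) (hdeg : ∀ k, (y k).natDegree = n k) (hmono : StrictMono n)
    (hle : ∀ k, (p * derivative (derivative (y k)) + q * derivative (y k) + r * y k).natDegree ≤ n k)
    (d : ℕ) (hd : 1 ≤ d) (hp : p.natDegree ≤ d + 2) (hq : q.natDegree ≤ d + 1)
    (hr : r.natDegree ≤ d) :
    p.coeff (d + 2) = 0 ∧ q.coeff (d + 1) = 0 ∧ r.coeff d = 0 := by
  set pc := p.coeff (d + 2)
  set qc := q.coeff (d + 1)
  set rc := r.coeff d
  set F : Polynomial ℝ := C pc * X ^ 2 + C (qc - pc) * X + C rc with hF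
  have hroot : ∀ k, 2 ≤ n k → F.eval (n k : ℝ) = 0 := by
    intro k hk2
    set N := n k with hN
    have hyd : (y k).natDegree = N := hdeg k
    -- coefficient of x^(N+d) in T(y k) vanishes
    have hvan : (p * derivative (derivative (y k)) + q * derivative (y k) + r * y k).coeff (N + d) = 0 := by
      apply coeff_eq_zero_of_natDegree_lt
      exact lt_of_le_of_lt (hle k) (by omega)
    -- degree bounds for derivatives
    have hd1 : (derivative (y k)).natDegree ≤ N - 1 :=
      (natDegree_derivative_le _).trans (by omega)
    have hd2 : (derivative (derivative (y k))).natDegree ≤ N - 2 :=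
      (natDegree_derivative_le _).trans (by omega)
    -- coefficients of derivatives
    have hc1 : (derivative (y k)).coeff (N - 1) = (y k).coeff N * (N : ℝ) := by
      rw [coeff_derivative, Nat.sub_add_cancel (by omega : 1 ≤ N),
        Nat.cast_sub (by omega : 1 ≤ N)]
      push_cast; ring
    have hc2 : (derivative (derivative (y k))).coeff (N - 2) =
        (y k).coeff N * (N : ℝ) * ((N : ℝ) - 1) := by
      rw [coeff_derivative]
      have : N - 2 + 1 = N - 1 := by omega
      rw [this, hc1]
      have : ((N - 2 : ℕ) : ℝ) + 1 = (N : ℝ) - 1 := by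
        have := Nat.cast_sub (by omega : 2 ≤ N) (R := ℝ)
        push_cast at this ⊢
        linarith
      rw [this]
    -- product coefficients
    have e1 : (p * derivative (derivative (y k))).coeff (N + d) =
        pc * ((y k).coeff N * (N : ℝ) * ((N : ℝ) - 1)) := by
      have : N + d = (d + 2) + (N - 2) := by omega
      rw [this, coeff_mul_add_eq_of_natDegree_le hp hd2, hc2]
    have e2 : (q * derivative (y k)).coeff (N + d) =
        qc * ((y k).coeff N * (N : ℝ)) := by
      have : N + d = (d + 1) + (N - 1) := by omega
      rw [this, coeff_mul_add_eq_of_natDegree_le hq hd1, hc1]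
    have e3 : (r * y k).coeff (N + d) = rc * (y k).coeff N := by
      have : N + d = d + N := by omega
      rw [this, coeff_mul_add_eq_of_natDegree_le hr (le_of_eq hyd)]
    have hlc : (y k).coeff N ≠ 0 := by
      rw [← hyd]; exact leadingCoeff_ne_zero.mpr (hy0 k)
    have hsum : pc * ((y k).coeff N * (N : ℝ) * ((N : ℝ) - 1)) +
        qc * ((y k).coeff N * (N : ℝ)) + rc * (y k).coeff N = 0 := by
      rw [← e1, ← e2, ← e3, ← coeff_add, ← coeff_add]; exact hvan
    have hev : F.eval (N : ℝ) * (y k).coeff N = 0 := by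
      simp only [hF, eval_add, eval_mul, eval_C, eval_pow, eval_X]
      nlinarith [hsum]
    exact (mul_eq_zero.mp hev).resolve_right hlc
  have hFzero : F = 0 := by
    apply eq_zero_of_infinite_isRoot
    apply Set.infinite_of_injective_forall_mem
      (f := fun k : ℕ => ((n (k + 2) : ℕ) : ℝ))
    · intro a b hab
      have : n (a + 2) = n (b + 2) := Nat.cast_injective hab
      have := hmono.injective this
      omega
    · intro k
      have h2 : 2 ≤ n (k + 2) := le_trans (by omega) (hmono.le_apply)
      exact hroot (k + 2) h2
  have h2 : pc = 0 := by
    have := congrArg (fun g => Polynomial.coeff g 2) hFzero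
    simpa [hF, coeff_add, coeff_C_mul, coeff_X_pow, coeff_C, coeff_X] using this
  have h0 : rc = 0 := by
    have := congrArg (fun g => Polynomial.coeff g 0) hFzero
    simpa [hF, coeff_add, coeff_C_mul, coeff_X_pow, coeff_C, coeff_X] using this
  have h1 : qc = 0 := by
    have := congrArg (fun g => Polynomial.coeff g 1) hFzero
    simp [hF, coeff_add, coeff_C_mul, coeff_X_pow, coeff_C, coeff_X] at this
    linarith [this]
  exact ⟨h2, h1, h0⟩

lemma natDegree_le_of_coeff_zero (f : Polynomial ℝ) (m : ℕ)
    (h1 : f.natDegree ≤ m + 1) (h2 : f.coeff (m + 1) = 0) : f.natDegree ≤ m := by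
  rw [natDegree_le_iff_coeff_eq_zero] at h1 ⊢
  intro N hN
  rcases eq_or_lt_of_le (Nat.succ_le_of_lt hN) with h | h
  · exact h ▸ h2
  · exact h1 N h

theorem stmt3 (p q r : Polynomial ℝ) (y : ℕ → Polynomial ℝ) (n : ℕ → ℕ)
    (hy0 : ∀ k, y k ≠ 0) (hdeg : ∀ k, (y k).natDegree = n k) (hmono : StrictMono n)
    (hT : ∀ k : ℕ, ∀ j ≤ k,
      p * derivative (derivative (y j)) + q * derivative (y j) + r * y j ∈
        Submodule.span ℝ (y '' {i | i ≤ k})) :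
    p.natDegree ≤ 2 ∧ q.natDegree ≤ 1 ∧ r.natDegree = 0 ∧
      ∀ (m : ℕ) (f : Polynomial ℝ), f.natDegree ≤ m →
        (p * derivative (derivative f) + q * derivative f + r * f).natDegree ≤ m := by
  have hle : ∀ k,
      (p * derivative (derivative (y k)) + q * derivative (y k) + r * y k).natDegree ≤ n k := by
    intro k
    have hspan : Submodule.span ℝ (y '' {i | i ≤ k}) ≤ degreeLE ℝ (n k) := by
      rw [Submodule.span_le]
      rintro _ ⟨i, hi, rfl⟩
      rw [SetLike.mem_coe, mem_degreeLE]
      refine (degree_le_natDegree).trans ?_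
      rw [hdeg i]
      exact_mod_cast Nat.cast_le.mpr (hmono.monotone hi)
    exact natDegree_le_iff_degree_le.mpr (mem_degreeLE.mp (hspan (hT k k le_rfl)))
  have claim : ∀ d, p.natDegree ≤ d + 2 → q.natDegree ≤ d + 1 → r.natDegree ≤ d →
      p.natDegree ≤ 2 ∧ q.natDegree ≤ 1 ∧ r.natDegree ≤ 0 := by
    intro d
    induction d with
    | zero => intro h1 h2 h3; exact ⟨h1, h2, h3⟩
    | succ d ih =>
      intro h1 h2 h3
      obtain ⟨c1, c2, c3⟩ := bochner_key p q r y n hy0 hdeg hmono hle (d + 1)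
        (by omega) h1 h2 h3
      exact ih (natDegree_le_of_coeff_zero p (d + 2) h1 c1)
        (natDegree_le_of_coeff_zero q (d + 1) h2 c2)
        (natDegree_le_of_coeff_zero r d h3 c3)
  obtain ⟨hp2, hq1, hr0⟩ := claim (p.natDegree + q.natDegree + r.natDegree)
    (by omega) (by omega) (by omega)
  refine ⟨hp2, hq1, Nat.le_zero.mp hr0, ?_⟩
  intro m f hf
  have hf1 : (derivative f).natDegree ≤ m - 1 :=
    (natDegree_derivative_le f).trans (Nat.sub_le_sub_right hf 1)
  have hf2 : (derivative (derivative f)).natDegree ≤ m - 2 := by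
    refine (natDegree_derivative_le _).trans ?_
    omega
  have hz1 : m = 0 → derivative f = 0 := by
    intro hm
    have : f = C (f.coeff 0) := eq_C_of_natDegree_le_zero (by omega)
    rw [this, derivative_C]
  have hz2 : m ≤ 1 → derivative (derivative f) = 0 := by
    intro hm
    have h0 : (derivative f).natDegree = 0 := by omega
    have : derivative f = C ((derivative f).coeff 0) := eq_C_of_natDegree_le_zero (by omega)
    rw [this, derivative_C]
  refine (natDegree_add_le _ _).trans
    (max_le ((natDegree_add_le _ _).trans (max_le ?_ ?_)) ?_)
  · rcases le_or_gt m 1 with h | h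
    · rw [hz2 h, mul_zero, natDegree_zero]; exact Nat.zero_le m
    · exact natDegree_mul_le.trans (by omega)
  · rcases Nat.eq_zero_or_pos m with h | h
    · rw [hz1 h, mul_zero, natDegree_zero]; exact Nat.zero_le m
    · exact natDegree_mul_le.trans (by omega)
  · exact natDegree_mul_le.trans (by omega)
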